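/- Let X, Y ∈ ℤ^{n×n} be symmetric with equal characteristic polynomials, let ζ, η ∈ ℤⁿ, and let p be a prime. Suppose rank_p(W_{X,ζ}) = n−1, rank_p(W_{Y,η}) = n−1, and the characteristic polynomial φ_X(λ) = det(λI − X), reduced modulo p, does not have two distinct roots in 𝔽_p. Then for every V ∈ ℤⁿ, W_{X,ζ} V ≡ 0 (mod p) holds if and only if W_{Y,η} V ≡ 0 (mod p). -/

import Mathlib

open Matrix
open Polynomial

/-- The walk matrix `[ζ, Xζ, X²ζ, …, X^{n−1}ζ]`: its `j`-th column is `X^j ζ`. -/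
def walkMatrix {n : ℕ} {R : Type*} [CommRing R]
    (X : Matrix (Fin n) (Fin n) R) (ζ : Fin n → R) : Matrix (Fin n) (Fin n) R :=
  Matrix.of fun i j => ((X ^ (j : ℕ)) *ᵥ ζ) i

namespace WalkAux

variable {n : ℕ} {K : Type*} [Field K]

noncomputable def polyOfVec (v : Fin n → K) : K[X] := ∑ j : Fin n, C (v j) * X ^ (j : ℕ)

lemma coeff_polyOfVec (v : Fin n → K) (k : ℕ) :
    (polyOfVec v).coeff k = if h : k < n then v ⟨k, h⟩ else 0 := by
  rw [polyOfVec, finset_sum_coeff]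
  simp only [coeff_C_mul, coeff_X_pow]
  split
  · next h =>
    rw [Finset.sum_eq_single (⟨k, h⟩ : Fin n)]
    · simp
    · intro b _ hb; simp [Fin.ext_iff] at hb ⊢; intro hbk; exact absurd hbk.symm hb
    · simp
  · next h =>
    apply Finset.sum_eq_zero
    intro b _
    have hbk : k ≠ (b : ℕ) := by omega
    simp [hbk]

lemma degree_polyOfVec_lt (v : Fin n → K) : (polyOfVec v).degree < n := by
  rw [degree_lt_iff_coeff_zero]
  intro m hm
  rw [coeff_polyOfVec]
  have : ¬ m < n := by exact_mod_cast not_lt.mpr (by exact_mod_cast hm)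
  simp [this]

lemma polyOfVec_coeff (g : K[X]) (hg : g.degree < n) :
    polyOfVec (fun j : Fin n => g.coeff j) = g := by
  ext k
  rw [coeff_polyOfVec]
  split
  · rfl
  · next h =>
    exact (coeff_eq_zero_of_degree_lt (lt_of_lt_of_le hg (by exact_mod_cast Nat.cast_le.mpr (not_lt.mp h)))).symm

lemma polyOfVec_eq_zero_iff (v : Fin n → K) : polyOfVec v = 0 ↔ v = 0 := by
  constructor
  · intro h
    funext j
    have := coeff_polyOfVec v j
    rw [h] at this
    simpa [j.isLt] using this.symm
  · intro h; simp [polyOfVec, h]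

lemma aeval_polyOfVec (A : Matrix (Fin n) (Fin n) K) (v : Fin n → K) :
    aeval A (polyOfVec v) = ∑ j : Fin n, v j • A ^ (j : ℕ) := by
  rw [polyOfVec, map_sum]
  refine Finset.sum_congr rfl fun j _ => ?_
  rw [_root_.map_mul, _root_.map_pow, aeval_X, aeval_C, ← Algebra.smul_def]

lemma walkMatrix_mulVec (A : Matrix (Fin n) (Fin n) K) (z : Fin n → K) (v : Fin n → K) :
    walkMatrix A z *ᵥ v = (aeval A (polyOfVec v)) *ᵥ z := by
  funext i
  simp only [walkMatrix, mulVec, dotProduct, of_apply, aeval_polyOfVec, Matrix.sum_apply,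
    Matrix.smul_apply, Finset.sum_mul, Finset.mul_sum, smul_eq_mul]
  rw [Finset.sum_comm]
  exact Finset.sum_congr rfl fun j _ => Finset.sum_congr rfl fun k _ => by ring

noncomputable def annIdeal (A : Matrix (Fin n) (Fin n) K) (z : Fin n → K) : Ideal K[X] where
  carrier := {g | (aeval A g) *ᵥ z = 0}
  add_mem' := fun {a b} ha hb => by
    simp only [Set.mem_setOf_eq, map_add, Matrix.add_mulVec] at *
    rw [ha, hb, add_zero]
  zero_mem' := by simp [Set.mem_setOf_eq]
  smul_mem' := fun c g hg => by
    simp only [Set.mem_setOf_eq, smul_eq_mul, _root_.map_mul] at *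
    rw [← Matrix.mulVec_mulVec, hg, Matrix.mulVec_zero]

lemma mem_annIdeal_iff {A : Matrix (Fin n) (Fin n) K} {z g} :
    g ∈ annIdeal A z ↔ (aeval A g) *ᵥ z = 0 := Iff.rfl


lemma polyOfVec_smul (c : K) (v : Fin n → K) :
    polyOfVec (c • v) = C c * polyOfVec v := by
  simp [polyOfVec, Finset.mul_sum, mul_assoc, C_mul]

lemma exists_span_eq (A : Matrix (Fin n) (Fin n) K) (z : Fin n → K) (hn : 0 < n)
    (hrank : (walkMatrix A z).rank = n - 1) :
    ∃ f : K[X], f ≠ 0 ∧ annIdeal A z = Ideal.span {f} ∧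
      ∃ a : K, A.charpoly = f * (X - C a) := by
  classical
  set I := annIdeal A z with hI
  set f₀ := Submodule.IsPrincipal.generator I with hf₀def
  have hφI : A.charpoly ∈ I := by
    rw [mem_annIdeal_iff, Matrix.aeval_self_charpoly, Matrix.zero_mulVec]
  have hφne : A.charpoly ≠ 0 := A.charpoly_monic.ne_zero
  have hf₀ne : f₀ ≠ 0 := by
    intro h
    have hbot := (Submodule.IsPrincipal.eq_bot_iff_generator_eq_zero I).2 h
    rw [hbot] at hφI
    exact hφne (by simpa using hφI)
  set S := LinearMap.ker (walkMatrix A z).mulVecLin with hSdef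
  have hrank' : Module.finrank K (LinearMap.range (walkMatrix A z).mulVecLin) = n - 1 := hrank
  have hrn : Module.finrank K (LinearMap.range (walkMatrix A z).mulVecLin)
      + Module.finrank K S = n := by
    rw [LinearMap.finrank_range_add_finrank_ker]
    simp
  have hS1 : Module.finrank K S = 1 := by omega
  have memS_iff : ∀ v : Fin n → K, v ∈ S ↔ polyOfVec v ∈ I := by
    intro v
    rw [hSdef, LinearMap.mem_ker, Matrix.mulVecLin_apply, walkMatrix_mulVec,
      hI, mem_annIdeal_iff]
  have hSne : S ≠ ⊥ := by
    intro h
    rw [h, finrank_bot] at hS1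
    exact one_ne_zero hS1.symm
  obtain ⟨v1, hv1S, hv1ne⟩ := (Submodule.ne_bot_iff S).1 hSne
  have hgv1 : polyOfVec v1 ∈ I := (memS_iff v1).1 hv1S
  have hgne : polyOfVec v1 ≠ 0 := fun h => hv1ne ((polyOfVec_eq_zero_iff v1).1 h)
  have hdvd1 : f₀ ∣ polyOfVec v1 := (Submodule.IsPrincipal.mem_iff_generator_dvd I).1 hgv1
  have hf₀lt : f₀.degree < n :=
    lt_of_le_of_lt (degree_le_of_dvd hdvd1 hgne) (degree_polyOfVec_lt v1)
  have hf₀nat : f₀.natDegree < n := (natDegree_lt_iff_degree_lt hf₀ne).2 hf₀lt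
  have hlow : ¬ (f₀.natDegree + 1 < n) := by
    intro hlt
    have hXf₀ne : X * f₀ ≠ 0 := mul_ne_zero X_ne_zero hf₀ne
    have hd2 : (X * f₀).degree < (n : WithBot ℕ) :=
      (natDegree_lt_iff_degree_lt hXf₀ne).1
        (by rw [natDegree_mul X_ne_zero hf₀ne, natDegree_X]; omega)
    set w1 : Fin n → K := fun j => f₀.coeff j with hw1def
    set w2 : Fin n → K := fun j => (X * f₀).coeff j with hw2def
    have hw1 : polyOfVec w1 = f₀ := polyOfVec_coeff _ hf₀lt
    have hw2 : polyOfVec w2 = X * f₀ := polyOfVec_coeff _ hd2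
    have hw1S : w1 ∈ S := (memS_iff w1).2 (hw1 ▸ Submodule.IsPrincipal.generator_mem I)
    have hw2S : w2 ∈ S := (memS_iff w2).2
      (hw2 ▸ Ideal.mul_mem_left I X (Submodule.IsPrincipal.generator_mem I))
    have hw1ne : w1 ≠ 0 := by
      intro h
      apply hf₀ne
      rw [← hw1, h]
      simp [polyOfVec]
    obtain ⟨c, hc⟩ := (finrank_eq_one_iff_of_nonzero' (⟨w1, hw1S⟩ : S)
      (by simpa [Subtype.ext_iff] using hw1ne)).1 hS1 ⟨w2, hw2S⟩
    have hc' : c • w1 = w2 := congrArg Subtype.val hc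
    have hpoly : C c * f₀ = X * f₀ := by
      rw [← hw1, ← polyOfVec_smul, hc', hw2, hw1]
    have := mul_right_cancel₀ hf₀ne hpoly
    exact X_ne_C c this.symm
  have hf₀deg : f₀.natDegree = n - 1 := by omega
  obtain ⟨q, hq⟩ := (Submodule.IsPrincipal.mem_iff_generator_dvd I).1 hφI
  have hqne : q ≠ 0 := by
    rintro rfl
    rw [mul_zero] at hq
    exact hφne hq
  have hφnat : A.charpoly.natDegree = n := by
    simpa using A.charpoly_natDegree_eq_dim
  have hqdeg : q.natDegree = 1 := by
    have hnd := natDegree_mul hf₀ne hqne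
    rw [← hq, hφnat, hf₀deg] at hnd
    omega
  have hq1 : q = C (q.coeff 1) * X + C (q.coeff 0) :=
    eq_X_add_C_of_degree_le_one (by rw [degree_eq_natDegree hqne, hqdeg]; exact_mod_cast le_refl 1)
  have hc1 : q.coeff 1 ≠ 0 := by
    have h := leadingCoeff_ne_zero.2 hqne
    rwa [leadingCoeff, hqdeg] at h
  refine ⟨f₀ * C (q.coeff 1), mul_ne_zero hf₀ne (fun h => hc1 (by simpa using h)),
    ?_, -(q.coeff 0 / q.coeff 1), ?_⟩
  · have hassoc : Associated f₀ (f₀ * C (q.coeff 1)) :=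
      ⟨(isUnit_C.2 (isUnit_iff_ne_zero.2 hc1)).unit, by rw [IsUnit.unit_spec]⟩
    rw [← Ideal.span_singleton_generator I, ← hf₀def]
    exact Ideal.span_singleton_eq_span_singleton.mpr hassoc
  · have hlin : C (q.coeff 1) * (X - C (-(q.coeff 0 / q.coeff 1)))
        = C (q.coeff 1) * X + C (q.coeff 0) := by
      rw [map_neg, sub_neg_eq_add, mul_add, ← C_mul]
      congr 2
      field_simp
    rw [hq, mul_assoc, hlin, ← hq1]

end WalkAux

open WalkAux

/-- **Lemma.** Let `X, Y` be symmetric integer matrices with the same characteristic polynomial.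
If `rank_p(W_{X,ζ}) = rank_p(W_{Y,η}) = n − 1` and the characteristic polynomial of `X` reduced
mod `p` has no two distinct roots in `𝔽_p`, then the mod-`p` kernels of the two walk matrices
coincide. -/
theorem walk_kernels_eq_of_no_two_distinct_roots
    {n : ℕ} (X Y : Matrix (Fin n) (Fin n) ℤ) (ζ η : Fin n → ℤ)
    (hXsymm : X.IsSymm) (hYsymm : Y.IsSymm)
    (hchar : X.charpoly = Y.charpoly)
    (p : ℕ) (hp : p.Prime) [Fact p.Prime]
    (hrankX : ((walkMatrix X ζ).map (Int.cast : ℤ → ZMod p)).rank = n - 1)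
    (hrankY : ((walkMatrix Y η).map (Int.cast : ℤ → ZMod p)).rank = n - 1)
    (hroots : ∀ a b : ZMod p, (X.charpoly.map (Int.castRingHom (ZMod p))).IsRoot a →
      (X.charpoly.map (Int.castRingHom (ZMod p))).IsRoot b → a = b) :
    ∀ V : Fin n → ℤ,
      (∀ i, (((walkMatrix X ζ *ᵥ V) i : ℤ) : ZMod p) = 0) ↔
      (∀ i, (((walkMatrix Y η *ᵥ V) i : ℤ) : ZMod p) = 0) := by
  intro V
  rcases Nat.eq_zero_or_pos n with hn | hn
  · subst hn
    exact ⟨fun _ i => i.elim0, fun _ i => i.elim0⟩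
  classical
  set K := ZMod p with hK
  -- walk matrix commutes with entrywise reduction mod p
  have hmap : ∀ (M : Matrix (Fin n) (Fin n) ℤ) (w : Fin n → ℤ),
      (walkMatrix M w).map (Int.cast : ℤ → K)
        = walkMatrix (M.map (Int.cast : ℤ → K)) (fun i => ((w i : ℤ) : K)) := by
    intro M w
    ext i j
    have hpow : (M.map (Int.cast : ℤ → K)) ^ (j : ℕ) = (M ^ (j : ℕ)).map Int.cast := by
      have h1 : M.map (Int.cast : ℤ → K) = (Int.castRingHom K).mapMatrix M := rfl
      rw [h1, ← map_pow]
      rfl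
    simp only [walkMatrix, Matrix.map_apply, of_apply, hpow, mulVec, dotProduct]
    push_cast
    exact (Int.cast_sum _ _).trans (Finset.sum_congr rfl fun x _ => Int.cast_mul _ _)
  have hcast : ∀ (M : Matrix (Fin n) (Fin n) ℤ) (w v : Fin n → ℤ),
      (∀ i, (((walkMatrix M w *ᵥ v) i : ℤ) : K) = 0)
        ↔ walkMatrix (M.map (Int.cast : ℤ → K)) (fun i => ((w i : ℤ) : K))
            *ᵥ (fun j => ((v j : ℤ) : K)) = 0 := by
    intro M w v
    rw [← hmap, funext_iff]
    apply forall_congr'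
    intro i
    have : ((walkMatrix M w).map (Int.cast : ℤ → K) *ᵥ fun j => ((v j : ℤ) : K)) i
        = (((walkMatrix M w *ᵥ v) i : ℤ) : K) := by
      simp only [mulVec, dotProduct, Matrix.map_apply]
      push_cast
      exact (Finset.sum_congr rfl fun x _ => (Int.cast_mul _ _).symm).trans (Int.cast_sum _ _).symm
    rw [this]
    exact ⟨fun h => by simp [h], fun h => by simpa using h⟩
  obtain ⟨fA, hfAne, hIA, a, hfacA⟩ :=
    exists_span_eq (X.map (Int.cast : ℤ → K)) (fun i => ((ζ i : ℤ) : K)) hn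
      (by rw [← hmap]; exact hrankX)
  obtain ⟨fB, hfBne, hIB, b, hfacB⟩ :=
    exists_span_eq (Y.map (Int.cast : ℤ → K)) (fun i => ((η i : ℤ) : K)) hn
      (by rw [← hmap]; exact hrankY)
  have hAchar : (X.map (Int.cast : ℤ → K)).charpoly = X.charpoly.map (Int.castRingHom K) :=
    Matrix.charpoly_map X (Int.castRingHom K)
  have hBchar : (Y.map (Int.cast : ℤ → K)).charpoly = X.charpoly.map (Int.castRingHom K) := by
    rw [hchar]
    exact Matrix.charpoly_map Y (Int.castRingHom K)
  have ha : (X.charpoly.map (Int.castRingHom K)).IsRoot a := by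
    rw [← hAchar, hfacA]
    simp [IsRoot]
  have hb : (X.charpoly.map (Int.castRingHom K)).IsRoot b := by
    rw [← hBchar, hfacB]
    simp [IsRoot]
  have hab : a = b := hroots a b ha hb
  subst hab
  have hfAB : fA = fB := by
    apply mul_right_cancel₀ (X_sub_C_ne_zero a)
    rw [← hfacA, ← hfacB, hAchar, hBchar]
  have hIAB : annIdeal (X.map (Int.cast : ℤ → K)) (fun i => ((ζ i : ℤ) : K))
      = annIdeal (Y.map (Int.cast : ℤ → K)) (fun i => ((η i : ℤ) : K)) := by
    rw [hIA, hIB, hfAB]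
  have hker : ∀ (M : Matrix (Fin n) (Fin n) K) (w : Fin n → K) (v : Fin n → K),
      (walkMatrix M w *ᵥ v = 0) ↔ polyOfVec v ∈ annIdeal M w := by
    intro M w v
    rw [walkMatrix_mulVec]
    exact Iff.rfl
  rw [hcast X ζ V, hcast Y η V, hker, hker, hIAB]
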